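/- Let K be a symmetric convex body in ℝ^n of volume 1, let 1 ≤ p < ∞ and θ ∈ S^{n−1}. Then B(p+1, n)^{1/p} ≤ h_{Z_p(K)}(θ)/h_K(θ) ≤ (n/(p+1))^{1/p}, where B(x,y) = Γ(x)Γ(y)/Γ(x+y) is the Beta function. -/

import Mathlib

open MeasureTheory Filter Set Metric
open scoped RealInnerProductSpace Topology ENNReal NNReal Pointwise

set_option maxHeartbeats 1000000

noncomputable section

/-- Euclidean space `ℝ^n`. -/
abbrev Euc (n : ℕ) := EuclideanSpace ℝ (Fin n)

/-- The support function `h_K(θ) = sup_{x ∈ K} ⟨x, θ⟩` of a set `K ⊆ ℝ^n`. -/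
noncomputable def suppFn {n : ℕ} (K : Set (Euc n)) (θ : Euc n) : ℝ :=
  sSup ((fun x => ⟪x, θ⟫) '' K)

namespace StmtAux

lemma contInner {n : ℕ} (θ : Euc n) : Continuous (fun x : Euc n => ⟪x, θ⟫) :=
  Continuous.inner continuous_id continuous_const

lemma hyperplane_null {n : ℕ} (θ : Euc n) (hθ : ‖θ‖ = 1) :
    volume {x : Euc n | ⟪x, θ⟫ = 0} = 0 := by
  have h2 : {x : Euc n | ⟪x, θ⟫ = 0}
      = ((LinearMap.ker ((innerSL ℝ θ : Euc n →L[ℝ] ℝ) : Euc n →ₗ[ℝ] ℝ) : Submodule ℝ (Euc n)) : Set (Euc n)) := by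
    ext x
    simp only [mem_setOf_eq, SetLike.mem_coe, LinearMap.mem_ker, ContinuousLinearMap.coe_coe,
      innerSL_apply_apply]
    rw [real_inner_comm]
  rw [h2]
  apply Measure.addHaar_submodule
  intro htop
  have h3 : θ ∈ LinearMap.ker ((innerSL ℝ θ : Euc n →L[ℝ] ℝ) : Euc n →ₗ[ℝ] ℝ) := by
    rw [htop]; trivial
  rw [LinearMap.mem_ker] at h3
  simp only [ContinuousLinearMap.coe_coe, innerSL_apply_apply, real_inner_self_eq_norm_mul_norm, hθ,
    mul_one] at h3
  norm_num at h3

lemma beta_real (p : ℝ) (hp : 0 < p) (n : ℕ) :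
    ∫ u in (0:ℝ)..1, u ^ (p-1) * (1-u) ^ n
      = Real.Gamma p * Real.Gamma (n+1) / Real.Gamma (p+n+1) := by
  have hre : (0:ℝ) < (((n:ℝ)+1 : ℝ) : ℂ).re := by
    rw [Complex.ofReal_re]; positivity
  have hps : (0:ℝ) < ((p:ℝ) : ℂ).re := by rw [Complex.ofReal_re]; exact hp
  have h := Complex.Gamma_mul_Gamma_eq_betaIntegral (s := ((p:ℝ):ℂ)) (t := (((n:ℝ)+1:ℝ):ℂ))
    hps hre
  have hbeta : Complex.betaIntegral ((p:ℝ):ℂ) (((n:ℝ)+1:ℝ):ℂ)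
      = ((∫ u in (0:ℝ)..1, u ^ (p-1) * (1-u) ^ n : ℝ) : ℂ) := by
    rw [Complex.betaIntegral, ← intervalIntegral.integral_ofReal]
    apply intervalIntegral.integral_congr
    intro x hx
    rw [Set.uIcc_of_le (by norm_num : (0:ℝ) ≤ 1)] at hx
    obtain ⟨hx0, hx1⟩ := hx
    show (x:ℂ) ^ ((p:ℂ) - 1) * (1 - (x:ℂ)) ^ ((((n:ℝ)+1:ℝ):ℂ) - 1) = ((x ^ (p-1) * (1-x) ^ n : ℝ) : ℂ)
    have e1 : ((x ^ (p-1) * (1-x) ^ n : ℝ) : ℂ) = ((x ^ (p-1) : ℝ):ℂ) * ((1-x:ℝ)^n : ℂ) := by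
      push_cast; ring
    rw [e1, Complex.ofReal_cpow hx0]
    have e2 : (((n:ℝ)+1:ℝ):ℂ) - 1 = (n:ℂ) := by push_cast; ring
    rw [e2, Complex.cpow_natCast]
    push_cast
    ring
  rw [hbeta] at h
  have hG : ∀ x : ℝ, Complex.Gamma ((x:ℝ):ℂ) = ((Real.Gamma x : ℝ) : ℂ) := fun x =>
    Complex.Gamma_ofReal x
  rw [hG] at h
  have h4 : Complex.Gamma ((((n:ℝ)+1:ℝ)):ℂ) = ((Real.Gamma ((n:ℝ)+1) : ℝ) : ℂ) :=
    Complex.Gamma_ofReal _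
  rw [h4] at h
  have h5 : ((p:ℝ):ℂ) + (((n:ℝ)+1:ℝ):ℂ) = (((p + n + 1 : ℝ)):ℂ) := by push_cast; ring
  rw [h5, Complex.Gamma_ofReal] at h
  have h6 : Real.Gamma p * Real.Gamma ((n:ℝ)+1)
      = Real.Gamma (p+n+1) * ∫ u in (0:ℝ)..1, u ^ (p-1) * (1-u) ^ n := by
    exact_mod_cast h
  have hGpos : 0 < Real.Gamma (p+n+1) := Real.Gamma_pos_of_pos (by positivity)
  field_simp
  linarith [h6]

lemma half_vol {n : ℕ} {K : Set (Euc n)} (hcomp : IsCompact K)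
    (hsymm : ∀ x ∈ K, -x ∈ K) (hvol : volume K = 1)
    (θ : Euc n) (hθ : ‖θ‖ = 1) :
    volume (K ∩ {x | 0 ≤ ⟪x, θ⟫}) = 2⁻¹ := by
  set P := K ∩ {x | 0 ≤ ⟪x, θ⟫} with hPdef
  set N := K ∩ {x | ⟪x, θ⟫ ≤ 0} with hNdef
  have hKm : MeasurableSet K := hcomp.isClosed.measurableSet
  have hNm : MeasurableSet N :=
    hKm.inter (isClosed_le (contInner θ) continuous_const).measurableSet
  have hNP : N = -P := by
    ext x
    simp only [Set.mem_neg, hPdef, hNdef, Set.mem_inter_iff, mem_setOf_eq, inner_neg_left]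
    constructor
    · rintro ⟨hxK, hx⟩
      exact ⟨hsymm x hxK, by linarith⟩
    · rintro ⟨hxK, hx⟩
      refine ⟨?_, by linarith⟩
      have := hsymm _ hxK
      simpa using this
  have hunion : P ∪ N = K := by
    ext x
    constructor
    · rintro (h | h) <;> exact h.1
    · intro hx
      rcases le_total 0 (⟪x, θ⟫) with h | h
      · exact Or.inl ⟨hx, h⟩
      · exact Or.inr ⟨hx, h⟩
  have hinter : volume (P ∩ N) = 0 := by
    refine measure_mono_null ?_ (hyperplane_null θ hθ)
    rintro x ⟨hxP, hxN⟩
    exact le_antisymm hxN.2 hxP.2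
  have key : volume (P ∪ N) + volume (P ∩ N) = volume P + volume N :=
    measure_union_add_inter P hNm
  rw [hunion, hvol, hinter, add_zero, hNP, Measure.measure_neg] at key
  have hfin : volume P ≠ ⊤ := by
    refine ne_top_of_le_ne_top ?_ (measure_mono (Set.inter_subset_left))
    rw [hvol]; exact ENNReal.one_ne_top
  have ha : (volume P).toReal + (volume P).toReal = 1 := by
    rw [← ENNReal.toReal_add hfin hfin, ← key]
    simp
  have hb : (volume P).toReal = 2⁻¹ := by linarith
  apply (ENNReal.toReal_eq_toReal_iff' hfin (by norm_num)).mp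
  rw [hb]
  norm_num

lemma lower_meas {n : ℕ} {K : Set (Euc n)} (hconv : Convex ℝ K) (hcomp : IsCompact K)
    (hsymm : ∀ x ∈ K, -x ∈ K) (hvol : volume K = 1)
    (θ : Euc n) (hθ : ‖θ‖ = 1) {x₀ : Euc n} (hx₀ : x₀ ∈ K)
    {t : ℝ} (ht : 0 < t) (hth : t ≤ ⟪x₀, θ⟫) :
    ENNReal.ofReal ((1 - t / ⟪x₀, θ⟫) ^ n) ≤ volume ({x | t ≤ |⟪x, θ⟫|} ∩ K) := by
  set h := ⟪x₀, θ⟫ with hh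
  have h0 : 0 < h := lt_of_lt_of_le ht hth
  set c : ℝ := 1 - t / h with hc
  have hc0 : 0 ≤ c := by
    have : t / h ≤ 1 := (div_le_one h0).2 hth
    simp only [hc]; linarith
  have hKm : MeasurableSet K := hcomp.isClosed.measurableSet
  set P := K ∩ {x | 0 ≤ ⟪x, θ⟫} with hPdef
  set A := {x : Euc n | t ≤ ⟪x, θ⟫} ∩ K with hAdef
  have hAm : MeasurableSet A :=
    ((isClosed_le continuous_const (contInner θ)).measurableSet).inter hKm
  have hincl : (fun y => (t / h) • x₀ + y) '' (c • P) ⊆ A := by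
    rintro z ⟨w, ⟨y, hy, rfl⟩, rfl⟩
    have hyK : y ∈ K := hy.1
    have hy0 : (0:ℝ) ≤ ⟪y, θ⟫ := hy.2
    constructor
    · show t ≤ ⟪(t / h) • x₀ + c • y, θ⟫
      rw [inner_add_left, real_inner_smul_left, real_inner_smul_left, ← hh]
      have h1 : t / h * h = t := div_mul_cancel₀ t h0.ne'
      nlinarith [mul_nonneg hc0 hy0]
    · exact hconv hx₀ hyK (div_nonneg ht.le h0.le) hc0 (by simp only [hc]; ring)
  have hvolS : volume ((fun y => (t / h) • x₀ + y) '' (c • P))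
      = ENNReal.ofReal (c ^ n) * 2⁻¹ := by
    rw [Set.image_add_left, measure_preimage_add,
      Measure.addHaar_smul_of_nonneg volume hc0, finrank_euclideanSpace_fin,
      half_vol hcomp hsymm hvol θ hθ]
  have hvolA : ENNReal.ofReal (c ^ n) * 2⁻¹ ≤ volume A := by
    rw [← hvolS]; exact measure_mono hincl
  have hsub : A ∪ -A ⊆ {x | t ≤ |⟪x, θ⟫|} ∩ K := by
    rintro x (hx | hx)
    · refine ⟨?_, hx.2⟩
      show t ≤ |⟪x, θ⟫|
      exact le_trans hx.1 (le_abs_self _)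
    · rw [Set.mem_neg] at hx
      refine ⟨?_, by simpa using hsymm _ hx.2⟩
      have h2 : t ≤ -⟪x, θ⟫ := by
        have h3 : t ≤ ⟪-x, θ⟫ := hx.1
        rwa [inner_neg_left] at h3
      exact le_trans h2 (neg_le_abs _)
  have hdisj : Disjoint A (-A) := by
    rw [Set.disjoint_left]
    intro x hxA hxnA
    rw [Set.mem_neg] at hxnA
    have h1 : t ≤ ⟪x, θ⟫ := hxA.1
    have h2 : t ≤ ⟪-x, θ⟫ := hxnA.1
    rw [inner_neg_left] at h2
    linarith
  have hmu : volume (A ∪ -A) = volume A + volume (-A) := measure_union hdisj hAm.neg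
  calc ENNReal.ofReal (c ^ n)
      = ENNReal.ofReal (c ^ n) * 2⁻¹ + ENNReal.ofReal (c ^ n) * 2⁻¹ := by
        rw [← mul_add, ENNReal.inv_two_add_inv_two, mul_one]
    _ ≤ volume A + volume (-A) := by
        rw [Measure.measure_neg]
        exact add_le_add hvolA hvolA
    _ = volume (A ∪ -A) := hmu.symm
    _ ≤ volume ({x | t ≤ |⟪x, θ⟫|} ∩ K) := measure_mono hsub

lemma upper_meas {n : ℕ} {K : Set (Euc n)} (hconv : Convex ℝ K) (hcomp : IsCompact K)
    (hvol : volume K = 1) (h0K : (0 : Euc n) ∈ K) (θ : Euc n) {h : ℝ}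
    (habs : ∀ x ∈ K, |⟪x, θ⟫| ≤ h) {t : ℝ} (ht : 0 < t) (hth : t ≤ h) :
    volume ({x | t < |⟪x, θ⟫|} ∩ K) ≤ ENNReal.ofReal (1 - (t / h) ^ n) := by
  have h0 : 0 < h := lt_of_lt_of_le ht hth
  set s : ℝ := t / h with hs
  have hs0 : 0 ≤ s := div_nonneg ht.le h0.le
  have hs1 : s ≤ 1 := (div_le_one h0).2 hth
  have hsml : s • K ⊆ K := by
    rintro _ ⟨y, hy, rfl⟩
    have := hconv (a := s) (b := 1 - s) hy h0K hs0 (by linarith) (by ring)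
    simpa using this
  have hdisj : ({x | t < |⟪x, θ⟫|} ∩ K) ⊆ K \ s • K := by
    rintro x ⟨hx1, hx2⟩
    refine ⟨hx2, fun hxs => ?_⟩
    obtain ⟨y, hy, rfl⟩ := hxs
    have h1 : |⟪s • y, θ⟫| = s * |⟪y, θ⟫| := by
      rw [real_inner_smul_left, abs_mul, abs_of_nonneg hs0]
    have h2 : |⟪s • y, θ⟫| ≤ s * h := by
      rw [h1]
      exact mul_le_mul_of_nonneg_left (habs y hy) hs0
    rw [hs, div_mul_cancel₀ t h0.ne'] at h2
    rw [mem_setOf_eq] at hx1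
    linarith
  have hvols : volume (s • K) = ENNReal.ofReal (s ^ n) := by
    rw [Measure.addHaar_smul_of_nonneg volume hs0, finrank_euclideanSpace_fin, hvol, mul_one]
  calc volume ({x | t < |⟪x, θ⟫|} ∩ K) ≤ volume (K \ s • K) := measure_mono hdisj
    _ = volume K - volume (s • K) := by
        have hm : MeasurableSet (s • K) := by
          have h2 : IsCompact (s • K) := hcomp.image (continuous_const_smul s)
          exact h2.isClosed.measurableSet
        apply measure_diff hsml hm.nullMeasurableSet
        rw [hvols]; exact ENNReal.ofReal_ne_top
    _ = ENNReal.ofReal (1:ℝ) - ENNReal.ofReal (s ^ n) := by rw [hvol, hvols, ENNReal.ofReal_one]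
    _ = ENNReal.ofReal (1 - s ^ n) := (ENNReal.ofReal_sub _ (pow_nonneg hs0 _)).symm

end StmtAux

end

theorem stmt2 {n : ℕ} (K : Set (Euc n))
    (hconv : Convex ℝ K) (hcomp : IsCompact K)
    (hsymm : ∀ x ∈ K, -x ∈ K) (hvol : volume K = 1)
    (p : ℝ) (hp : 1 ≤ p) (θ : Euc n) (hθ : ‖θ‖ = 1) :
    (Real.Gamma (p + 1) * Real.Gamma n / Real.Gamma (p + 1 + n)) ^ (1 / p) ≤
        (∫ x in K, |⟪x, θ⟫| ^ p) ^ (1 / p) / suppFn K θ ∧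
      (∫ x in K, |⟪x, θ⟫| ^ p) ^ (1 / p) / suppFn K θ ≤ ((n : ℝ) / (p + 1)) ^ (1 / p) := by
  classical
  have hp0 : (0:ℝ) < p := lt_of_lt_of_le one_pos hp
  have hθ0 : θ ≠ 0 := by intro hz; rw [hz] at hθ; simp at hθ
  have hn : 0 < n := by
    have hnt : Nontrivial (Euc n) := nontrivial_of_ne θ 0 hθ0
    have h1 : 0 < Module.finrank ℝ (Euc n) := Module.finrank_pos
    rwa [finrank_euclideanSpace_fin] at h1
  have hn1 : (1:ℝ) ≤ n := by exact_mod_cast hn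
  have hnR : (0:ℝ) < n := by exact_mod_cast hn
  have hKm : MeasurableSet K := hcomp.isClosed.measurableSet
  have hKne : K.Nonempty := by
    rcases Set.eq_empty_or_nonempty K with hc | hc
    · rw [hc] at hvol; simp at hvol
    · exact hc
  have h0K : (0 : Euc n) ∈ K := by
    obtain ⟨x, hx⟩ := hKne
    have h1 := hsymm x hx
    have h2 := hconv (a := (1:ℝ)/2) (b := (1:ℝ)/2) hx h1 (by norm_num) (by norm_num) (by norm_num)
    have h3 : ((1:ℝ)/2) • x + ((1:ℝ)/2) • (-x) = 0 := by
      rw [smul_neg]; abel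
    rwa [h3] at h2
  obtain ⟨x₀, hx₀K, hmax'⟩ := hcomp.exists_isMaxOn hKne (StmtAux.contInner θ).continuousOn
  have hmax : ∀ x ∈ K, ⟪x, θ⟫ ≤ ⟪x₀, θ⟫ := fun x hx => hmax' hx
  set h : ℝ := ⟪x₀, θ⟫ with hhdef
  have hsupp : suppFn K θ = h := by
    apply IsGreatest.csSup_eq
    constructor
    · exact ⟨x₀, hx₀K, rfl⟩
    · rintro y ⟨x, hx, rfl⟩
      exact hmax x hx
  have habs : ∀ x ∈ K, |⟪x, θ⟫| ≤ h := by
    intro x hx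
    rw [abs_le]
    refine ⟨?_, hmax x hx⟩
    have h1 := hmax _ (hsymm x hx)
    rw [inner_neg_left] at h1
    linarith
  have h0 : 0 < h := by
    rcases lt_or_ge 0 h with h1 | h1
    · exact h1
    · exfalso
      have hsub : K ⊆ {x : Euc n | ⟪x, θ⟫ = 0} := by
        intro x hx
        have h2 := habs x hx
        have h3 : |⟪x, θ⟫| ≤ 0 := le_trans h2 h1
        show ⟪x, θ⟫ = 0
        exact abs_eq_zero.mp (le_antisymm h3 (abs_nonneg _))
      have h4 : volume K = 0 := measure_mono_null hsub (StmtAux.hyperplane_null θ hθ)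
      rw [hvol] at h4
      simp at h4
  -- measure-theoretic setup
  set μ : Measure (Euc n) := volume.restrict K with hμ
  set f : Euc n → ℝ := fun x => |⟪x, θ⟫| with hf
  have hfc : Continuous f := (StmtAux.contInner θ).abs
  have hf_nn : 0 ≤ᵐ[μ] f := Eventually.of_forall fun x => abs_nonneg _
  have hf_m : AEMeasurable f μ := hfc.measurable.aemeasurable
  have key_le := MeasureTheory.lintegral_rpow_eq_lintegral_meas_le_mul μ hf_nn hf_m hp0
  have key_lt := MeasureTheory.lintegral_rpow_eq_lintegral_meas_lt_mul μ hf_nn hf_m hp0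
  set I : ℝ := ∫ x in K, |⟪x, θ⟫| ^ p with hI
  have hI0 : 0 ≤ I := by
    rw [hI]
    exact integral_nonneg fun x => Real.rpow_nonneg (abs_nonneg _) p
  set Lint := ∫⁻ ω, ENNReal.ofReal (f ω ^ p) ∂μ with hLint
  have hIdef : I = Lint.toReal := by
    rw [hI, hLint, hμ]
    exact integral_eq_lintegral_of_nonneg_ae
      (Eventually.of_forall fun x => Real.rpow_nonneg (abs_nonneg _) p)
      ((hfc.rpow_const (fun x => Or.inr hp0.le)).aestronglyMeasurable)
  have hμK : μ Set.univ = 1 := by rw [hμ, Measure.restrict_apply_univ, hvol]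
  have hfin : Lint ≠ ⊤ := by
    have hb : Lint ≤ ENNReal.ofReal (h ^ p) := by
      rw [hLint]
      calc ∫⁻ ω, ENNReal.ofReal (f ω ^ p) ∂μ ≤ ∫⁻ _, ENNReal.ofReal (h ^ p) ∂μ := by
            apply lintegral_mono_ae
            rw [hμ]
            filter_upwards [ae_restrict_mem hKm] with x hx
            exact ENNReal.ofReal_le_ofReal
              (Real.rpow_le_rpow (abs_nonneg _) (habs x hx) hp0.le)
        _ = ENNReal.ofReal (h ^ p) := by rw [lintegral_const, hμK, mul_one]
    exact ne_top_of_le_ne_top ENNReal.ofReal_ne_top hb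
  have hmeas_le : ∀ t : ℝ, μ {a | t ≤ f a} = volume ({x | t ≤ |⟪x, θ⟫|} ∩ K) := by
    intro t
    rw [hμ, Measure.restrict_apply (isClosed_le continuous_const hfc).measurableSet]
  have hmeas_lt : ∀ t : ℝ, μ {a | t < f a} = volume ({x | t < |⟪x, θ⟫|} ∩ K) := by
    intro t
    rw [hμ, Measure.restrict_apply (isOpen_lt continuous_const hfc).measurableSet]
  -- the constant C
  set C : ℝ := Real.Gamma (p + 1) * Real.Gamma n / Real.Gamma (p + 1 + n) with hC
  have hC0 : 0 ≤ C := by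
    rw [hC]
    have g1 := Real.Gamma_pos_of_pos (show (0:ℝ) < p + 1 by linarith)
    have g2 := Real.Gamma_pos_of_pos hnR
    have g3 := Real.Gamma_pos_of_pos (show (0:ℝ) < p + 1 + n by linarith)
    positivity
  ----------------------------------------------------------------
  -- LOWER BOUND
  ----------------------------------------------------------------
  set l : ℝ → ℝ := fun t => (1 - t / h) ^ n * t ^ (p - 1) with hl
  have hlcont : Continuous l := by
    apply Continuous.mul
    · exact (continuous_const.sub (continuous_id.div_const h)).pow n
    · exact continuous_id.rpow_const (fun x => Or.inr (by linarith))
  have hlint : IntegrableOn l (Ioo 0 h) :=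
    (hlcont.integrableOn_Icc (a := 0) (b := h)).mono_set Ioo_subset_Icc_self
  have hlnn : 0 ≤ᵐ[volume.restrict (Ioo 0 h)] l := by
    filter_upwards [ae_restrict_mem measurableSet_Ioo] with t ht
    have h1 : 0 ≤ 1 - t / h := by
      have h2 : t / h ≤ 1 := (div_le_one h0).2 ht.2.le
      linarith
    exact mul_nonneg (pow_nonneg h1 n) (Real.rpow_nonneg ht.1.le _)
  set L : ℝ := ∫ t in Ioo 0 h, l t with hL
  have hLlint : ∫⁻ t in Ioo 0 h, ENNReal.ofReal (l t) = ENNReal.ofReal L := by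
    rw [hL]; exact (ofReal_integral_eq_lintegral_ofReal hlint hlnn).symm
  have hlow : ENNReal.ofReal L
      ≤ ∫⁻ t in Ioi 0, μ {a | t ≤ f a} * ENNReal.ofReal (t ^ (p - 1)) := by
    rw [← hLlint]
    calc ∫⁻ t in Ioo 0 h, ENNReal.ofReal (l t)
        ≤ ∫⁻ t in Ioo 0 h, μ {a | t ≤ f a} * ENNReal.ofReal (t ^ (p - 1)) := by
          apply lintegral_mono_ae
          filter_upwards [ae_restrict_mem measurableSet_Ioo] with t ht
          have h1 : 0 ≤ 1 - t / h := by
            have h2 : t / h ≤ 1 := (div_le_one h0).2 ht.2.le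
            linarith
          rw [hl]
          simp only
          rw [ENNReal.ofReal_mul (pow_nonneg h1 n)]
          apply mul_le_mul_left
          rw [hmeas_le t]
          exact StmtAux.lower_meas hconv hcomp hsymm hvol θ hθ hx₀K ht.1 ht.2.le
      _ ≤ ∫⁻ t in Ioi 0, μ {a | t ≤ f a} * ENNReal.ofReal (t ^ (p - 1)) :=
          lintegral_mono_set Ioo_subset_Ioi_self
  have hIlow : p * L ≤ I := by
    rw [hIdef]
    have h1 : ENNReal.ofReal (p * L) ≤ Lint := by
      rw [key_le, ENNReal.ofReal_mul hp0.le]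
      exact mul_le_mul_right hlow _
    exact (ENNReal.ofReal_le_iff_le_toReal hfin).mp h1
  -- compute L
  have hL1 : L = h ^ p * ∫ u in (0:ℝ)..1, u ^ (p - 1) * (1 - u) ^ n := by
    rw [hL, ← MeasureTheory.integral_Ioc_eq_integral_Ioo,
      ← intervalIntegral.integral_of_le h0.le]
    have h2 : EqOn l (fun t => (fun u => (1 - u) ^ n * (u * h) ^ (p - 1)) (t / h))
        (Set.uIcc 0 h) := by
      intro t _
      rw [hl]
      simp only
      rw [div_mul_cancel₀ t h0.ne']
    rw [intervalIntegral.integral_congr h2,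
      intervalIntegral.integral_comp_div (fun u : ℝ => (1 - u) ^ n * (u * h) ^ (p - 1)) h0.ne',
      zero_div, div_self h0.ne']
    have h3 : ∫ u in (0:ℝ)..1, (1 - u) ^ n * (u * h) ^ (p - 1)
        = h ^ (p - 1) * ∫ u in (0:ℝ)..1, u ^ (p - 1) * (1 - u) ^ n := by
      rw [← intervalIntegral.integral_const_mul]
      apply intervalIntegral.integral_congr
      intro u hu
      rw [Set.uIcc_of_le (by norm_num : (0:ℝ) ≤ 1)] at hu
      show (1 - u) ^ n * (u * h) ^ (p - 1) = h ^ (p - 1) * (u ^ (p - 1) * (1 - u) ^ n)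
      rw [Real.mul_rpow hu.1 h0.le]
      ring
    rw [h3, smul_eq_mul, ← mul_assoc]
    congr 1
    rw [show p = 1 + (p - 1) by ring, Real.rpow_add h0, Real.rpow_one]
    ring_nf
  have hbeta := StmtAux.beta_real p hp0 n
  have hGp : Real.Gamma (p + 1) = p * Real.Gamma p := Real.Gamma_add_one hp0.ne'
  have hGn : Real.Gamma ((n:ℝ) + 1) = n * Real.Gamma n :=
    Real.Gamma_add_one (Nat.cast_ne_zero.mpr hn.ne')
  have hGpos : 0 < Real.Gamma (p + ↑n + 1) := Real.Gamma_pos_of_pos (by linarith)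
  have hpL : p * L = h ^ p * ((n:ℝ) * C) := by
    have e1 : Real.Gamma (p + 1 + n) = Real.Gamma (p + ↑n + 1) := by
      congr 1; ring
    rw [hL1, hbeta, hC, e1, hGp, hGn]
    field_simp
  have hIlow' : h ^ p * C ≤ I := by
    refine le_trans ?_ hIlow
    rw [hpL]
    apply mul_le_mul_of_nonneg_left ?_ (Real.rpow_nonneg h0.le p)
    exact le_mul_of_one_le_left hC0 hn1
  ----------------------------------------------------------------
  -- UPPER BOUND
  ----------------------------------------------------------------
  set ub : ℝ → ℝ := fun t => (1 - (t / h) ^ n) * t ^ (p - 1) with hub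
  have hubcont : Continuous ub := by
    apply Continuous.mul
    · exact continuous_const.sub ((continuous_id.div_const h).pow n)
    · exact continuous_id.rpow_const (fun x => Or.inr (by linarith))
  have hubint : IntegrableOn ub (Ioo 0 h) :=
    (hubcont.integrableOn_Icc (a := 0) (b := h)).mono_set Ioo_subset_Icc_self
  have hubnn : 0 ≤ᵐ[volume.restrict (Ioo 0 h)] ub := by
    filter_upwards [ae_restrict_mem measurableSet_Ioo] with t ht
    have h1 : (t / h) ^ n ≤ 1 := by
      apply pow_le_one₀ (div_nonneg ht.1.le h0.le) ((div_le_one h0).2 ht.2.le)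
    exact mul_nonneg (by linarith) (Real.rpow_nonneg ht.1.le _)
  set U : ℝ := ∫ t in Ioo 0 h, ub t with hU
  have hU0 : 0 ≤ U := by
    rw [hU]
    exact integral_nonneg_of_ae hubnn
  have hUlint : ∫⁻ t in Ioo 0 h, ENNReal.ofReal (ub t) = ENNReal.ofReal U := by
    rw [hU]; exact (ofReal_integral_eq_lintegral_ofReal hubint hubnn).symm
  have hupJ : ∫⁻ t in Ioi 0, μ {a | t < f a} * ENNReal.ofReal (t ^ (p - 1))
      ≤ ENNReal.ofReal U := by
    have hun : Ioi (0:ℝ) = Ioo 0 h ∪ Ici h := (Set.Ioo_union_Ici_eq_Ioi h0).symm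
    have hdsj : Disjoint (Ioo (0:ℝ) h) (Ici h) := by
      rw [Set.disjoint_left]
      intro t ht ht'
      exact absurd ht' (not_le.2 ht.2)
    rw [hun, lintegral_union measurableSet_Ici hdsj]
    have hzero : ∫⁻ t in Ici h, μ {a | t < f a} * ENNReal.ofReal (t ^ (p - 1)) = 0 := by
      rw [setLIntegral_congr_fun measurableSet_Ici ?_, lintegral_zero]
      intro t ht
      have hempty : {x : Euc n | t < |⟪x, θ⟫|} ∩ K = ∅ := by
        rw [Set.eq_empty_iff_forall_notMem]
        rintro x ⟨hx1, hx2⟩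
        rw [mem_setOf_eq] at hx1
        have := habs x hx2
        have hht : h ≤ t := ht
        linarith
      show μ {a | t < f a} * ENNReal.ofReal (t ^ (p - 1)) = 0
      rw [hmeas_lt t, hempty, measure_empty, zero_mul]
    rw [hzero, add_zero, ← hUlint]
    apply lintegral_mono_ae
    filter_upwards [ae_restrict_mem measurableSet_Ioo] with t ht
    have h1 : (t / h) ^ n ≤ 1 :=
      pow_le_one₀ (div_nonneg ht.1.le h0.le) ((div_le_one h0).2 ht.2.le)
    rw [hub]
    simp only
    rw [ENNReal.ofReal_mul (by linarith : (0:ℝ) ≤ 1 - (t / h) ^ n)]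
    apply mul_le_mul_left
    rw [hmeas_lt t]
    exact StmtAux.upper_meas hconv hcomp hvol h0K θ habs ht.1 ht.2.le
  have hIup : I ≤ p * U := by
    rw [hIdef]
    apply ENNReal.toReal_le_of_le_ofReal (by positivity)
    rw [key_lt, ENNReal.ofReal_mul hp0.le]
    exact mul_le_mul_right hupJ _
  -- compute U
  have hU1 : U = h ^ p / p - h ^ p / (p + n) := by
    have hcong : ∀ t ∈ Ioo (0:ℝ) h,
        ub t = t ^ (p - 1) - h⁻¹ ^ n * t ^ ((n:ℝ) + p - 1) := by
      intro t ht
      rw [hub]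
      simp only
      have e1 : (t / h) ^ n = h⁻¹ ^ n * t ^ (n : ℕ) := by
        rw [div_pow]
        rw [div_eq_mul_inv, inv_pow]
        ring
      have e2 : (t : ℝ) ^ (n : ℕ) * t ^ (p - 1) = t ^ ((n:ℝ) + p - 1) := by
        rw [← Real.rpow_natCast t n, ← Real.rpow_add ht.1]
        congr 1
        ring
      rw [e1]
      rw [sub_mul, one_mul, mul_assoc, e2]
    rw [hU, setIntegral_congr_fun measurableSet_Ioo hcong,
      ← MeasureTheory.integral_Ioc_eq_integral_Ioo, ← intervalIntegral.integral_of_le h0.le]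
    have hint1 : IntervalIntegrable (fun t : ℝ => t ^ (p - 1)) volume 0 h :=
      intervalIntegral.intervalIntegrable_rpow' (by linarith)
    have hint2 : IntervalIntegrable (fun t : ℝ => h⁻¹ ^ n * t ^ ((n:ℝ) + p - 1)) volume 0 h :=
      (intervalIntegral.intervalIntegrable_rpow' (by linarith)).const_mul _
    rw [intervalIntegral.integral_sub hint1 hint2, intervalIntegral.integral_const_mul]
    have hEval1 : ∫ t in (0:ℝ)..h, t ^ (p - 1) = h ^ p / p := by
      rw [integral_rpow (Or.inl (by linarith : (-1:ℝ) < p - 1))]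
      rw [show p - 1 + 1 = p by ring, Real.zero_rpow hp0.ne']
      ring
    have hEval2 : ∫ t in (0:ℝ)..h, t ^ ((n:ℝ) + p - 1) = h ^ ((n:ℝ) + p) / ((n:ℝ) + p) := by
      rw [integral_rpow (Or.inl (by linarith : (-1:ℝ) < (n:ℝ) + p - 1))]
      rw [show (n:ℝ) + p - 1 + 1 = (n:ℝ) + p by ring,
        Real.zero_rpow (by positivity : (n:ℝ) + p ≠ 0)]
      ring
    rw [hEval1, hEval2]
    have e3 : h⁻¹ ^ n * (h ^ ((n:ℝ) + p) / ((n:ℝ) + p)) = h ^ p / (p + n) := by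
      rw [Real.rpow_add h0, Real.rpow_natCast]
      rw [← mul_div_assoc, ← mul_assoc, inv_pow, inv_mul_cancel₀ (pow_ne_zero n h0.ne'),
        one_mul]
      rw [add_comm ((n:ℝ)) p]
    rw [e3]
  have hpU : p * U = h ^ p * ((n:ℝ) / (p + n)) := by
    rw [hU1]
    field_simp
    ring
  have hIup' : I ≤ h ^ p * ((n:ℝ) / (p + 1)) := by
    refine le_trans hIup ?_
    rw [hpU]
    apply mul_le_mul_of_nonneg_left ?_ (Real.rpow_nonneg h0.le p)
    apply div_le_div_of_nonneg_left hnR.le (by linarith) (by linarith)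
  ----------------------------------------------------------------
  -- CONCLUSION
  ----------------------------------------------------------------
  rw [hsupp]
  have hpinv0 : (0:ℝ) ≤ 1 / p := by positivity
  have hid : (h ^ p : ℝ) ^ (1 / p) = h := by
    rw [← Real.rpow_mul h0.le, mul_one_div, div_self hp0.ne', Real.rpow_one]
  constructor
  · have h1 : (h ^ p * C) ^ (1 / p) ≤ I ^ (1 / p) :=
      Real.rpow_le_rpow (by positivity) hIlow' hpinv0
    have h2 : (h ^ p * C) ^ (1 / p) = h * C ^ (1 / p) := by
      rw [Real.mul_rpow (Real.rpow_nonneg h0.le p) hC0, hid]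
    rw [le_div_iff₀ h0]
    calc C ^ (1 / p) * h = h * C ^ (1 / p) := mul_comm _ _
      _ = (h ^ p * C) ^ (1 / p) := h2.symm
      _ ≤ I ^ (1 / p) := h1
  · have h1 : I ^ (1 / p) ≤ (h ^ p * ((n:ℝ) / (p + 1))) ^ (1 / p) :=
      Real.rpow_le_rpow hI0 hIup' hpinv0
    have h2 : (h ^ p * ((n:ℝ) / (p + 1))) ^ (1 / p) = h * ((n:ℝ) / (p + 1)) ^ (1 / p) := by
      rw [Real.mul_rpow (Real.rpow_nonneg h0.le p) (by positivity), hid]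
    rw [div_le_iff₀ h0]
    calc I ^ (1 / p) ≤ h * ((n:ℝ) / (p + 1)) ^ (1 / p) := h2 ▸ h1
      _ = ((n:ℝ) / (p + 1)) ^ (1 / p) * h := mul_comm _ _
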